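/- Define λ(p) := (p−1)·(π/(p·sin(π/p)))^p for p > 1. Then λ is strictly increasing on (1, ∞). -/

import Mathlib

open Real Filter Topology

lemma sin_ge_sub_cube' {x : ℝ} (hx : 0 ≤ x) : x - x ^ 3 / 6 ≤ Real.sin x := by
  have hmono : Monotone (fun t : ℝ => Real.sin t - t + t ^ 3 / 6) := by
    apply monotone_of_deriv_nonneg
    · fun_prop
    · intro y
      have h3 : HasDerivAt (fun t : ℝ => t ^ 3 / 6) (3 * y ^ 2 / 6) y := by
        simpa using (hasDerivAt_pow 3 y).div_const 6
      have h : HasDerivAt (fun t : ℝ => Real.sin t - t + t ^ 3 / 6)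
          (Real.cos y - 1 + 3 * y ^ 2 / 6) y :=
        ((Real.hasDerivAt_sin y).sub (hasDerivAt_id y)).add h3
      rw [h.deriv]
      have := Real.one_sub_sq_div_two_le_cos (x := y)
      nlinarith [sq_nonneg y]
  have h0 := hmono hx
  simp only [Real.sin_zero] at h0
  nlinarith [h0]

lemma key_numeric {θ : ℝ} (h0 : 0 < θ) (h2 : θ ≤ 1.5708) :
    θ * (1 - θ ^ 2 / 12) * (9.86965056 - 3.1415 * θ + θ ^ 2) < 9.4245 := by
  nlinarith [sq_nonneg (θ - 1.5708), sq_nonneg (θ - 1), mul_nonneg h0.le (sub_nonneg.2 h2),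
    mul_nonneg (mul_nonneg h0.le h0.le) (sub_nonneg.2 h2), sq_nonneg θ,
    mul_nonneg (mul_nonneg h0.le (sub_nonneg.2 h2)) (sub_nonneg.2 h2),
    sq_nonneg (θ * (θ - 1.5708)), sq_nonneg (θ^2 - 1)]

lemma key_half {θ : ℝ} (h0 : 0 < θ) (h2 : θ ≤ π / 2) :
    (π - θ) ^ 2 < (1 - θ ^ 2 / 6) ^ 2 * (π ^ 2 - π * θ + θ ^ 2) := by
  have hπu : π < 3.1416 := by linarith [Real.pi_lt_d6]
  have hπl : 3.1415 < π := by linarith [Real.pi_gt_d6]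
  have hθ2 : θ ≤ 1.5708 := by linarith
  have hfac : (0:ℝ) ≤ 1 - θ ^ 2 / 12 := by nlinarith
  have hπsq : π ^ 2 < 9.86965056 := by nlinarith
  have hinner : π ^ 2 - π * θ + θ ^ 2 ≤ 9.86965056 - 3.1415 * θ + θ ^ 2 := by nlinarith
  have hbound : θ * (1 - θ ^ 2 / 12) * (π ^ 2 - π * θ + θ ^ 2) < 3 * π := by
    calc θ * (1 - θ ^ 2 / 12) * (π ^ 2 - π * θ + θ ^ 2)
        ≤ θ * (1 - θ ^ 2 / 12) * (9.86965056 - 3.1415 * θ + θ ^ 2) := by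
          apply mul_le_mul_of_nonneg_left hinner (by positivity)
      _ < 9.4245 := key_numeric h0 hθ2
      _ ≤ 3 * π := by linarith
  nlinarith [mul_lt_mul_of_pos_left hbound (by linarith : (0:ℝ) < θ / 3)]

lemma key_poly {θ : ℝ} (h0 : 0 < θ) (hπ : θ < π) :
    θ ^ 2 * (π - θ) ^ 2 < Real.sin θ ^ 2 * (π ^ 2 - π * θ + θ ^ 2) := by
  have main : ∀ x : ℝ, 0 < x → x ≤ π / 2 →
      x ^ 2 * (π - x) ^ 2 < Real.sin x ^ 2 * (π ^ 2 - π * x + x ^ 2) := by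
    intro x hx0 hx2
    have hπu : π < 3.1416 := by linarith [Real.pi_lt_d6]
    have hs := sin_ge_sub_cube' hx0.le
    have hx15 : x ≤ 1.5708 := by linarith
    have hxsq : x ^ 2 ≤ 6 := by nlinarith
    have hx6 : 0 ≤ x - x ^ 3 / 6 := by nlinarith [mul_nonneg hx0.le (sub_nonneg.2 hxsq)]
    have hsq : (x - x ^ 3 / 6) ^ 2 ≤ Real.sin x ^ 2 := by nlinarith
    have hk := key_half hx0 hx2
    have hB : 0 < π ^ 2 - π * x + x ^ 2 := by nlinarith [Real.pi_gt_d6]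
    calc x ^ 2 * (π - x) ^ 2 < x ^ 2 * ((1 - x ^ 2 / 6) ^ 2 * (π ^ 2 - π * x + x ^ 2)) :=
          (mul_lt_mul_iff_right₀ (by positivity)).2 hk
      _ = (x - x ^ 3 / 6) ^ 2 * (π ^ 2 - π * x + x ^ 2) := by ring
      _ ≤ Real.sin x ^ 2 * (π ^ 2 - π * x + x ^ 2) := mul_le_mul_of_nonneg_right hsq hB.le
  rcases le_or_gt θ (π / 2) with h | h
  · exact main θ h0 h
  · have := main (π - θ) (by linarith) (by linarith)
    rw [Real.sin_pi_sub] at this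
    nlinarith [this]

noncomputable def Ff : ℝ → ℝ := fun θ =>
  θ / (π - θ) + (Real.log θ - Real.log (Real.sin θ)) + θ * Real.cos θ / Real.sin θ - 1

lemma Ff_hasDeriv {θ : ℝ} (h0 : 0 < θ) (hπ : θ < π) :
    HasDerivAt Ff (π / (π - θ) ^ 2 + 1 / θ - θ / Real.sin θ ^ 2) θ := by
  have hs : 0 < Real.sin θ := Real.sin_pos_of_pos_of_lt_pi h0 hπ
  have hne : π - θ ≠ 0 := sub_ne_zero_of_ne hπ.ne'
  have h1 : HasDerivAt (fun t : ℝ => t / (π - t))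
      ((1 * (π - θ) - θ * (0 - 1)) / (π - θ) ^ 2) θ :=
    (hasDerivAt_id θ).div ((hasDerivAt_const θ π).sub (hasDerivAt_id θ)) hne
  have h2 : HasDerivAt Real.log θ⁻¹ θ := Real.hasDerivAt_log h0.ne'
  have h3 : HasDerivAt (fun t : ℝ => Real.log (Real.sin t))
      ((Real.sin θ)⁻¹ * Real.cos θ) θ :=
    (Real.hasDerivAt_log hs.ne').comp θ (Real.hasDerivAt_sin θ)
  have h4 : HasDerivAt (fun t : ℝ => t * Real.cos t / Real.sin t)
      (((1 * Real.cos θ + θ * -Real.sin θ) * Real.sin θ - θ * Real.cos θ * Real.cos θ) /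
        Real.sin θ ^ 2) θ :=
    ((hasDerivAt_id θ).mul (Real.hasDerivAt_cos θ)).div (Real.hasDerivAt_sin θ) hs.ne'
  have h := (((h1.add (h2.sub h3)).add h4).sub_const 1 : HasDerivAt Ff _ θ)
  refine h.congr_deriv ?_
  have hpyth := Real.sin_sq_add_cos_sq θ
  rw [show θ * Real.cos θ * Real.cos θ = θ * (1 - Real.sin θ ^ 2) by linear_combination θ * hpyth]
  field_simp
  ring

lemma Ff_deriv_pos {θ : ℝ} (h0 : 0 < θ) (hπ : θ < π) :
    0 < π / (π - θ) ^ 2 + 1 / θ - θ / Real.sin θ ^ 2 := by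
  have hs : 0 < Real.sin θ := Real.sin_pos_of_pos_of_lt_pi h0 hπ
  have hdθ : 0 < π - θ := by linarith
  have key := key_poly h0 hπ
  have h : π / (π - θ) ^ 2 + 1 / θ - θ / Real.sin θ ^ 2 =
      (Real.sin θ ^ 2 * (π ^ 2 - π * θ + θ ^ 2) - θ ^ 2 * (π - θ) ^ 2) /
        ((π - θ) ^ 2 * θ * Real.sin θ ^ 2) := by
    field_simp
    ring
  rw [h]
  exact div_pos (by linarith) (by positivity)

lemma Ff_mono : StrictMonoOn Ff (Set.Ioo 0 π) := by
  apply strictMonoOn_of_deriv_pos (convex_Ioo 0 π)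
  · exact fun θ hθ => ((Ff_hasDeriv hθ.1 hθ.2).differentiableAt.continuousAt).continuousWithinAt
  · intro θ hθ
    rw [interior_Ioo] at hθ
    rw [(Ff_hasDeriv hθ.1 hθ.2).deriv]
    exact Ff_deriv_pos hθ.1 hθ.2

lemma sin_div_tendsto : Tendsto (fun θ : ℝ => Real.sin θ / θ) (𝓝[>] 0) (𝓝 1) := by
  have h := hasDerivAt_iff_tendsto_slope.1 (Real.hasDerivAt_sin 0)
  rw [Real.cos_zero] at h
  have h2 := h.mono_left (nhdsWithin_mono 0 (fun x hx => ne_of_gt hx))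
  refine Tendsto.congr' ?_ h2
  filter_upwards [self_mem_nhdsWithin] with x hx
  rw [slope_def_field]
  simp

lemma Ff_tendsto : Tendsto Ff (𝓝[>] (0:ℝ)) (𝓝 0) := by
  have hmemIoo : Set.Ioo (0:ℝ) π ∈ 𝓝[>] (0:ℝ) :=
    Ioo_mem_nhdsGT_of_mem ⟨le_refl 0, Real.pi_pos⟩
  have hA : Tendsto (fun θ : ℝ => θ / (π - θ)) (𝓝[>] 0) (𝓝 0) := by
    have hc : ContinuousAt (fun θ : ℝ => θ / (π - θ)) 0 := by
      apply ContinuousAt.div continuousAt_id (by fun_prop)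
      simp [Real.pi_ne_zero]
    simpa using hc.tendsto.mono_left nhdsWithin_le_nhds
  have hB : Tendsto (fun θ : ℝ => Real.log θ - Real.log (Real.sin θ)) (𝓝[>] 0) (𝓝 0) := by
    have hlog : Tendsto (fun θ : ℝ => Real.log (Real.sin θ / θ)) (𝓝[>] 0) (𝓝 0) := by
      have := (Real.continuousAt_log one_ne_zero).tendsto.comp sin_div_tendsto
      simpa [Function.comp_def] using this
    have := hlog.neg
    rw [neg_zero] at this
    refine Tendsto.congr' ?_ this
    filter_upwards [hmemIoo] with θ hθ
    rw [Real.log_div (Real.sin_pos_of_pos_of_lt_pi hθ.1 hθ.2).ne' hθ.1.ne']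
    ring
  have hC : Tendsto (fun θ : ℝ => θ * Real.cos θ / Real.sin θ) (𝓝[>] 0) (𝓝 1) := by
    have hcos : Tendsto (fun θ : ℝ => Real.cos θ) (𝓝[>] (0:ℝ)) (𝓝 1) := by
      have : ContinuousAt (fun θ : ℝ => Real.cos θ) 0 := Real.continuous_cos.continuousAt
      simpa using this.tendsto.mono_left nhdsWithin_le_nhds
    have hdiv := hcos.div sin_div_tendsto one_ne_zero
    rw [div_one] at hdiv
    refine Tendsto.congr' ?_ hdiv
    filter_upwards [hmemIoo] with θ hθ
    simp only [Pi.div_apply]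
    rw [div_div_eq_mul_div]
    ring
  have := ((hA.add hB).add hC).sub_const 1
  simp at this
  exact this

lemma Ff_pos {θ : ℝ} (h0 : 0 < θ) (hπ : θ < π) : 0 < Ff θ := by
  have hmem : θ ∈ Set.Ioo 0 π := ⟨h0, hπ⟩
  have hhalf : θ / 2 ∈ Set.Ioo 0 π := ⟨by linarith, by linarith⟩
  have h1 : 0 ≤ Ff (θ / 2) := by
    refine le_of_tendsto Ff_tendsto ?_
    filter_upwards [Ioo_mem_nhdsGT_of_mem ⟨le_refl 0, (by linarith : (0:ℝ) < θ/2)⟩] with t ht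
    exact (Ff_mono ⟨ht.1, by linarith [ht.2]⟩ hhalf ht.2).le
  have h2 : Ff (θ / 2) < Ff θ := Ff_mono hhalf hmem (by linarith)
  linarith

noncomputable def Hh : ℝ → ℝ := fun p =>
  Real.log (p - 1) + p * (Real.log π - Real.log (p * Real.sin (π / p)))

lemma Hh_hasDeriv {p : ℝ} (hp : 1 < p) : HasDerivAt Hh (Ff (π / p)) p := by
  have hp0 : 0 < p := by linarith
  have hθ0 : 0 < π / p := div_pos Real.pi_pos hp0
  have hθπ : π / p < π := by rw [div_lt_iff₀ hp0]; nlinarith [Real.pi_pos]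
  have hsin : 0 < Real.sin (π / p) := Real.sin_pos_of_pos_of_lt_pi hθ0 hθπ
  have hu : 0 < p * Real.sin (π / p) := mul_pos hp0 hsin
  have hp1 : p - 1 ≠ 0 := sub_ne_zero_of_ne (by linarith)
  have d1 : HasDerivAt (fun t : ℝ => Real.log (t - 1)) ((p - 1)⁻¹ * 1) p :=
    by have := (Real.hasDerivAt_log hp1).comp p ((hasDerivAt_id p).sub_const 1); exact this
  have d2 : HasDerivAt (fun t : ℝ => π / t) ((0 * p - π * 1) / p ^ 2) p :=
    (hasDerivAt_const p π).div (hasDerivAt_id p) hp0.ne'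
  have d3 : HasDerivAt (fun t : ℝ => Real.sin (π / t))
      (Real.cos (π / p) * ((0 * p - π * 1) / p ^ 2)) p :=
    (Real.hasDerivAt_sin (π / p)).comp p d2
  have d4 : HasDerivAt (fun t : ℝ => t * Real.sin (π / t))
      (1 * Real.sin (π / p) + p * (Real.cos (π / p) * ((0 * p - π * 1) / p ^ 2))) p :=
    (hasDerivAt_id p).mul d3
  have d5 : HasDerivAt (fun t : ℝ => Real.log (t * Real.sin (π / t)))
      ((p * Real.sin (π / p))⁻¹ *
        (1 * Real.sin (π / p) + p * (Real.cos (π / p) * ((0 * p - π * 1) / p ^ 2)))) p :=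
    by have := (Real.hasDerivAt_log hu.ne').comp p d4; exact this
  have d6 := (hasDerivAt_const p (Real.log π)).sub d5
  have d7 := (hasDerivAt_id p).mul d6
  have total := d1.add d7
  refine total.congr_deriv ?_
  unfold Ff
  simp only [Pi.sub_apply, id]
  rw [Real.log_div Real.pi_pos.ne' hp0.ne', Real.log_mul hp0.ne' hsin.ne']
  have hππ : π - π / p ≠ 0 := sub_ne_zero_of_ne hθπ.ne'
  have hfirst : (π / p) / (π - π / p) = 1 / (p - 1) := by
    rw [div_eq_div_iff hππ hp1]
    field_simp
  rw [hfirst]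
  field_simp
  ring

lemma Hh_mono : StrictMonoOn Hh (Set.Ioi 1) := by
  apply strictMonoOn_of_deriv_pos (convex_Ioi 1)
  · exact fun p hp => ((Hh_hasDeriv hp).differentiableAt.continuousAt).continuousWithinAt
  · intro p hp
    rw [interior_Ioi] at hp
    rw [(Hh_hasDeriv hp).deriv]
    have hp0 : (0:ℝ) < p := by have := Set.mem_Ioi.1 hp; linarith
    exact Ff_pos (div_pos Real.pi_pos hp0)
      (by rw [div_lt_iff₀ hp0]; nlinarith [Real.pi_pos, Set.mem_Ioi.1 hp])

theorem lambda_strictMonoOn :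
    StrictMonoOn (fun p : ℝ => (p - 1) * (π / (p * Real.sin (π / p))) ^ p)
      (Set.Ioi (1 : ℝ)) := by
  have key : ∀ p : ℝ, p ∈ Set.Ioi 1 →
      (p - 1) * (π / (p * Real.sin (π / p))) ^ p = Real.exp (Hh p) := by
    intro p hp
    have hp1 : (1:ℝ) < p := hp
    have hp0 : 0 < p := by linarith
    have hθ0 : 0 < π / p := div_pos Real.pi_pos hp0
    have hθπ : π / p < π := by rw [div_lt_iff₀ hp0]; nlinarith [Real.pi_pos]
    have hsin : 0 < Real.sin (π / p) := Real.sin_pos_of_pos_of_lt_pi hθ0 hθπ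
    have hu : 0 < p * Real.sin (π / p) := mul_pos hp0 hsin
    have hbase : 0 < π / (p * Real.sin (π / p)) := div_pos Real.pi_pos hu
    show (p - 1) * (π / (p * Real.sin (π / p))) ^ p = Real.exp (Hh p)
    rw [Real.rpow_def_of_pos hbase, Real.log_div Real.pi_pos.ne' hu.ne']
    unfold Hh
    rw [Real.exp_add, Real.exp_log (by linarith : (0:ℝ) < p - 1),
      mul_comm (Real.log π - Real.log (p * Real.sin (π / p))) p]
  intro a ha b hb hab
  simp only
  rw [key a ha, key b hb]
  exact Real.exp_lt_exp.mpr (Hh_mono ha hb hab)
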